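/- Let Ω be a finite probability space, Ŷ : Ω → [0,1] with finite range, and S : Ω → {0,1} with P(S=0) > 0 and P(S=1) > 0. If Ŷ and S are independent, then for every threshold υ ∈ [0,1] and every function f : [0,1] → [0,1], the thresholded attack Ŝ = 1_{[υ,1]}∘f∘Ŷ satisfies ½(P(Ŝ=0 | S=0) + P(Ŝ=1 | S=1)) = ½. -/
import Mathlib


open scoped Classical
noncomputable section

/-- Probability of an event under weight function `p` on a finite sample space. -/
def Pr {Omega : Type*} [Fintype Omega] (p : Omega → ℝ) (A : Omega → Prop) : ℝ :=
  ∑ ω, if A ω then p ω else 0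

/-- Conditional probability `P(A | B)`. -/
def cPr {Omega : Type*} [Fintype Omega] (p : Omega → ℝ) (A B : Omega → Prop) : ℝ :=
  Pr p (fun ω => A ω ∧ B ω) / Pr p B
theorem stmt_15 {Omega : Type*} [Fintype Omega] (p : Omega → ℝ)
    (hp : ∀ ω, 0 ≤ p ω) (hsum : ∑ ω, p ω = 1)
    (Yh : Omega → ℝ) (hYh : ∀ ω, Yh ω ∈ Set.Icc (0 : ℝ) 1)
    (S : Omega → Fin 2)
    (hS0 : 0 < Pr p (fun ω => S ω = 0)) (hS1 : 0 < Pr p (fun ω => S ω = 1))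
    (hind : ∀ (A : Set ℝ) (s : Fin 2),
        Pr p (fun ω => Yh ω ∈ A ∧ S ω = s)
          = Pr p (fun ω => Yh ω ∈ A) * Pr p (fun ω => S ω = s)) :
    ∀ (υ : ℝ), υ ∈ Set.Icc (0 : ℝ) 1 →
      ∀ f : ℝ → ℝ, (∀ x, f x ∈ Set.Icc (0 : ℝ) 1) →
        (cPr p (fun ω => (if υ ≤ f (Yh ω) then (1 : Fin 2) else 0) = 0)
            (fun ω => S ω = 0)
          + cPr p (fun ω => (if υ ≤ f (Yh ω) then (1 : Fin 2) else 0) = 1)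
            (fun ω => S ω = 1)) / 2 = 1 / 2 := by

  intro υ hυ f hf
  set A : Set ℝ := {x | υ ≤ f x} with hA
  have h0 : ∀ ω, ((if υ ≤ f (Yh ω) then (1 : Fin 2) else 0) = 0) ↔ Yh ω ∈ Aᶜ := by
    intro ω
    by_cases h : υ ≤ f (Yh ω) <;> simp [h, hA]
  have h1 : ∀ ω, ((if υ ≤ f (Yh ω) then (1 : Fin 2) else 0) = 1) ↔ Yh ω ∈ A := by
    intro ω
    by_cases h : υ ≤ f (Yh ω) <;> simp [h, hA]
  have e0 : cPr p (fun ω => (if υ ≤ f (Yh ω) then (1 : Fin 2) else 0) = 0)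
      (fun ω => S ω = 0) = Pr p (fun ω => Yh ω ∈ Aᶜ) := by
    unfold cPr
    have : Pr p (fun ω => (if υ ≤ f (Yh ω) then (1 : Fin 2) else 0) = 0 ∧ S ω = 0)
        = Pr p (fun ω => Yh ω ∈ Aᶜ ∧ S ω = 0) := by
      unfold Pr; apply Finset.sum_congr rfl; intro ω _; simp only [h0 ω]; split_ifs <;> rfl
    rw [this, hind Aᶜ 0, mul_div_assoc, div_self hS0.ne', mul_one]
  have e1 : cPr p (fun ω => (if υ ≤ f (Yh ω) then (1 : Fin 2) else 0) = 1)
      (fun ω => S ω = 1) = Pr p (fun ω => Yh ω ∈ A) := by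
    unfold cPr
    have : Pr p (fun ω => (if υ ≤ f (Yh ω) then (1 : Fin 2) else 0) = 1 ∧ S ω = 1)
        = Pr p (fun ω => Yh ω ∈ A ∧ S ω = 1) := by
      unfold Pr; apply Finset.sum_congr rfl; intro ω _; simp only [h1 ω]; split_ifs <;> rfl
    rw [this, hind A 1, mul_div_assoc, div_self hS1.ne', mul_one]
  have hsum' : Pr p (fun ω => Yh ω ∈ Aᶜ) + Pr p (fun ω => Yh ω ∈ A) = 1 := by
    unfold Pr
    rw [← Finset.sum_add_distrib, ← hsum]
    apply Finset.sum_congr rfl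
    intro ω _
    by_cases h : Yh ω ∈ A <;> simp [h]
  rw [e0, e1, hsum']
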